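/- Splitting by unlinking (Proposition 6.1): Fix the splitting data Č, x̌, s, n, k, l, h_1,…,h_s, κ. Let Č′ be the symmetric (s+n+1)×(s+n+1) integer matrix extending Č by a last node ι = s+n+1 with Č′(u,ι) = h_u for u ≤ s, Č′(s+i,ι) = k+1 for 1 ≤ i ≤ n, and Č′(ι,ι) = l−2k−1, and extend x̌ by x̌′(ι) = q·κ. Fix an enumeration a_1,…,a_n of {1,…,n} and let σ be the permutation of {1,…,n} with σ(a_t) = t for all t. Let (D,y) be the quiver pair with s+2n+1 nodes obtained by applying to (Č′,x̌′) the unlinkings U(s+a_1, ι), then U(s+a_2, ι), …, then U(s+a_n, ι) (the node created at step t has index s+n+1+t). Let π be the bijection of node sets that keeps nodes 1,…,s+n at the positions of 1,…,s and s+1,…,s+n in the ordering 1,…,s, s+1, (s+1)′, …, s+n, (s+n)′, ι; sends the node created at step t to the position of (s+a_t)′; and sends ι = s+n+1 to the last position. Then (D,y) coincides after relabeling by π with the quiver pair given by the (k,l)-split quiver pair (C_σ, x_σ) augmented by a last node ι whose entries are: h_u toward each spectator u ≤ s, k toward each split node s+i, l−k−1 toward each copy (s+i)′, diagonal entry l−2k−1,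 and variable q·κ. -/

import Mathlib

namespace QuiverUnlink

universe u

/-- Unlinking of the distinct nodes `i` and `j`: the matrix part.
Nodes are indexed `0, …, m-1`; the newly created node has index `m`. -/
def unlinkC {m : ℕ} (C : Fin m → Fin m → ℤ) (i j : Fin m) :
    Fin (m + 1) → Fin (m + 1) → ℤ := fun a b =>
  if ha : (a : ℕ) < m then
    if hb : (b : ℕ) < m then
      if ((⟨a, ha⟩ : Fin m) = i ∧ (⟨b, hb⟩ : Fin m) = j) ∨
         ((⟨a, ha⟩ : Fin m) = j ∧ (⟨b, hb⟩ : Fin m) = i) then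
        C i j - 1
      else C ⟨a, ha⟩ ⟨b, hb⟩
    else
      if (⟨a, ha⟩ : Fin m) = i then C i i + C i j - 1
      else if (⟨a, ha⟩ : Fin m) = j then C j j + C i j - 1
      else C ⟨a, ha⟩ i + C ⟨a, ha⟩ j
  else
    if hb : (b : ℕ) < m then
      if (⟨b, hb⟩ : Fin m) = i then C i i + C i j - 1
      else if (⟨b, hb⟩ : Fin m) = j then C j j + C i j - 1
      else C ⟨b, hb⟩ i + C ⟨b, hb⟩ j
    else C i i + C j j + 2 * C i j - 1

/-- Unlinking of the distinct nodes `i` and `j`: the generating-parameters part. -/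
def unlinkX {G : Type*} [CommGroup G] {m : ℕ} (q : G) (x : Fin m → G) (i j : Fin m) :
    Fin (m + 1) → G := fun a =>
  if ha : (a : ℕ) < m then x ⟨a, ha⟩ else q⁻¹ * x i * x j

/-- A quiver pair: a symmetric integer matrix together with generating parameters in `G`,
on `m` nodes (indexed `0, …, m-1`). -/
structure QP (G : Type u) where
  m : ℕ
  C : Fin m → Fin m → ℤ
  x : Fin m → G

/-- Matrix entry of a quiver pair, read at natural-number indices (junk value `0` out of range). -/
def QP.Cn {G : Type u} (Q : QP G) (a b : ℕ) : ℤ :=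
  if ha : a < Q.m then if hb : b < Q.m then Q.C ⟨a, ha⟩ ⟨b, hb⟩ else 0 else 0

/-- Generating parameter of a quiver pair, read at a natural-number index
(junk value `1` out of range). -/
def QP.xn {G : Type u} [CommGroup G] (Q : QP G) (a : ℕ) : G :=
  if h : a < Q.m then Q.x ⟨a, h⟩ else 1

/-- One unlinking step `U(i,j)`, with nodes given by natural-number indices.
If the indices are not valid the quiver pair is returned unchanged (this case never
occurs under the validity hypotheses of the statements below). -/
def unlinkStep {G : Type u} [CommGroup G] (q : G) (i j : ℕ) (Q : QP G) : QP G :=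
  if h : i < Q.m ∧ j < Q.m ∧ i ≠ j then
    { m := Q.m + 1
      C := unlinkC Q.C ⟨i, h.1⟩ ⟨j, h.2.1⟩
      x := unlinkX q Q.x ⟨i, h.1⟩ ⟨j, h.2.1⟩ }
  else Q

/-- Apply a sequence of unlinkings, leftmost entry first. -/
def applySeq {G : Type u} [CommGroup G] (q : G) (S : List (ℕ × ℕ)) (Q : QP G) : QP G :=
  S.foldl (fun R e => unlinkStep q e.1 e.2 R) Q

/-- A sequence of unlinkings starting at `m` nodes: the entry at (0-based) position `t`
consists of two distinct node indices `< m + t` (the node created at step `t` has index `m + t`). -/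
def ValidSeq (m : ℕ) (S : List (ℕ × ℕ)) : Prop :=
  ∀ t : Fin S.length,
    (S.get t).1 ≠ (S.get t).2 ∧ (S.get t).1 < m + (t : ℕ) ∧ (S.get t).2 < m + (t : ℕ)

/-- Two quiver pairs are permutation-equivalent rel the first `m` nodes. -/
def PermEquivRel {G : Type u} (m : ℕ) (X Y : QP G) : Prop :=
  ∃ (h : X.m = Y.m) (π : Equiv.Perm (Fin Y.m)),
    (∀ a : Fin Y.m, (a : ℕ) < m → π a = a) ∧
    (∀ a b : Fin X.m, X.C a b = Y.C (π (Fin.cast h a)) (π (Fin.cast h b))) ∧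
    (∀ a : Fin X.m, X.x a = Y.x (π (Fin.cast h a)))

/-- Two quiver pairs are permutation-equivalent. -/
def PermEquiv {G : Type u} (X Y : QP G) : Prop :=
  ∃ (h : X.m = Y.m) (π : Equiv.Perm (Fin Y.m)),
    (∀ a b : Fin X.m, X.C a b = Y.C (π (Fin.cast h a)) (π (Fin.cast h b))) ∧
    (∀ a : Fin X.m, X.x a = Y.x (π (Fin.cast h a)))

/-- Read a `Fin m`-indexed integer matrix at natural-number indices (junk value `0`). -/
def matN {m : ℕ} (Cc : Fin m → Fin m → ℤ) (a b : ℕ) : ℤ :=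
  if ha : a < m then if hb : b < m then Cc ⟨a, ha⟩ ⟨b, hb⟩ else 0 else 0

/-- Read a `Fin s`-indexed integer vector at a natural-number index (junk value `0`). -/
def intN {s : ℕ} (h : Fin s → ℤ) (a : ℕ) : ℤ :=
  if ha : a < s then h ⟨a, ha⟩ else 0

/-- Read a `Fin m`-indexed vector of group elements at a natural-number index (junk `1`). -/
def grpN {G : Type u} [CommGroup G] {m : ℕ} (xc : Fin m → G) (a : ℕ) : G :=
  if ha : a < m then xc ⟨a, ha⟩ else 1

/-- The matrix of the `(k,l)`-split quiver pair with permutation `σ`, read at natural-number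
indices.  The `s + 2n` nodes are ordered as: spectators `0, …, s-1`, then for each
`i = 0, …, n-1` the split node `s + 2i` followed by its primed copy `s + 2i + 1`. -/
def splitCN (s n : ℕ) (k l : ℤ) (CcN : ℕ → ℕ → ℤ) (hN : ℕ → ℤ) (σ : Equiv.Perm (Fin n))
    (a b : ℕ) : ℤ :=
  if a < s then
    if b < s then CcN a b
    else CcN a (s + (b - s) / 2) + (if (b - s) % 2 = 1 then hN a else 0)
  else if b < s then
    CcN (s + (a - s) / 2) b + (if (a - s) % 2 = 1 then hN b else 0)
  else
    if (a - s) % 2 = 0 then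
      if (b - s) % 2 = 0 then CcN (s + (a - s) / 2) (s + (b - s) / 2)
      else
        if (a - s) / 2 = (b - s) / 2 then CcN (s + (a - s) / 2) (s + (b - s) / 2) + k
        else if hij : (a - s) / 2 < n ∧ (b - s) / 2 < n then
          (if σ ⟨(a - s) / 2, hij.1⟩ < σ ⟨(b - s) / 2, hij.2⟩ then
            CcN (s + (a - s) / 2) (s + (b - s) / 2) + k
          else CcN (s + (a - s) / 2) (s + (b - s) / 2) + k + 1)
        else 0
    else
      if (b - s) % 2 = 0 then
        if (a - s) / 2 = (b - s) / 2 then CcN (s + (a - s) / 2) (s + (b - s) / 2) + k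
        else if hij : (a - s) / 2 < n ∧ (b - s) / 2 < n then
          (if σ ⟨(b - s) / 2, hij.2⟩ < σ ⟨(a - s) / 2, hij.1⟩ then
            CcN (s + (a - s) / 2) (s + (b - s) / 2) + k
          else CcN (s + (a - s) / 2) (s + (b - s) / 2) + k + 1)
        else 0
      else CcN (s + (a - s) / 2) (s + (b - s) / 2) + l

/-- The generating parameters of the `(k,l)`-split quiver pair, read at natural-number
indices: spectators and split nodes keep their parameters, primed copies get the extra
multiplicative factor `κ`. -/
def splitXN {G : Type u} [CommGroup G] (s : ℕ) (xcN : ℕ → G) (κ : G) (a : ℕ) : G :=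
  if a < s then xcN a
  else if (a - s) % 2 = 0 then xcN (s + (a - s) / 2) else xcN (s + (a - s) / 2) * κ

section Aux

variable {G : Type u} [CommGroup G] (q : G) (s n : ℕ) (k l : ℤ)
  (Cc : Fin (s + n) → Fin (s + n) → ℤ) (xc : Fin (s + n) → G) (h : Fin s → ℤ) (κ : G)
  (e : Equiv.Perm (Fin n))

/-- The enumeration read at natural-number indices (junk `0`). -/
def En (r : ℕ) : ℕ := if hr : r < n then ((e ⟨r, hr⟩ : Fin n) : ℕ) else 0

/-- The inverse permutation read at natural-number indices (junk `0`). -/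
def Sn (j : ℕ) : ℕ := if hj : j < n then ((e.symm ⟨j, hj⟩ : Fin n) : ℕ) else 0

lemma En_lt {r : ℕ} (hr : r < n) : En n e r < n := by
  simp only [En, dif_pos hr]; exact (e ⟨r, hr⟩).isLt

lemma Sn_lt {j : ℕ} (hj : j < n) : Sn n e j < n := by
  simp only [Sn, dif_pos hj]; exact (e.symm ⟨j, hj⟩).isLt

lemma Sn_En {r : ℕ} (hr : r < n) : Sn n e (En n e r) = r := by
  simp only [En, Sn, dif_pos hr, dif_pos ((e ⟨r, hr⟩).isLt)]
  simp

lemma En_Sn {j : ℕ} (hj : j < n) : En n e (Sn n e j) = j := by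
  simp only [En, Sn, dif_pos hj, dif_pos ((e.symm ⟨j, hj⟩).isLt)]
  simp

lemma En_inj {r r' : ℕ} (hr : r < n) (hr' : r' < n)
    (hrr : En n e r = En n e r') : r = r' := by
  have := Sn_En n e hr
  rw [hrr, Sn_En n e hr'] at this
  omega

lemma Sn_eq_imp {j t : ℕ} (hj : j < n) (ht : t < n) (hS : Sn n e j = t) :
    j = En n e t := by
  rw [← hS, En_Sn n e hj]

end Aux
section Aux2

variable {G : Type u} [CommGroup G] (q : G) (s n : ℕ) (k l : ℤ)
  (Cc : Fin (s + n) → Fin (s + n) → ℤ) (xc : Fin (s + n) → G) (h : Fin s → ℤ) (κ : G)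
  (e : Equiv.Perm (Fin n))

/-- Row of the node created at step `t` towards old nodes `b < s + n`. -/
def gRow (t b : ℕ) : ℤ :=
  if b < s then matN Cc (s + En n e t) b + intN h b
  else if b = s + En n e t then matN Cc (s + En n e t) (s + En n e t) + k
  else if b < s + n then
    matN Cc (s + En n e t) b + (if Sn n e (b - s) < t then k else k + 1)
  else 0

/-- The matrix after `t` unlinking steps, at natural-number indices. -/
def Fmat (t a b : ℕ) : ℤ :=
  if a < s + n then
    if b < s + n then matN Cc a b
    else if b = s + n then
      (if a < s then intN h a else if Sn n e (a - s) < t then k else k + 1)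
    else if b - (s + n + 1) < t then gRow s n k Cc h e (b - (s + n + 1)) a
    else 0
  else if a = s + n then
    if b < s + n then (if b < s then intN h b else if Sn n e (b - s) < t then k else k + 1)
    else if b = s + n then l - 2 * k - 1
    else if b - (s + n + 1) < t then l - k - 1
    else 0
  else if a - (s + n + 1) < t then
    if b < s + n then gRow s n k Cc h e (a - (s + n + 1)) b
    else if b = s + n then l - k - 1
    else if b - (s + n + 1) < t then
      matN Cc (s + En n e (a - (s + n + 1))) (s + En n e (b - (s + n + 1))) + l
    else 0
  else 0

/-- The parameters after `t` unlinking steps, at natural-number indices. -/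
def Xvec (t a : ℕ) : G :=
  if a < s + n then grpN xc a
  else if a = s + n then q * κ
  else if a - (s + n + 1) < t then grpN xc (s + En n e (a - (s + n + 1))) * κ
  else 1

lemma matN_symm (hCc : ∀ a b, Cc a b = Cc b a) (a b : ℕ) :
    matN Cc a b = matN Cc b a := by
  unfold matN; split_ifs <;> first | apply hCc | rfl

lemma Fmat_symm (hCc : ∀ a b, Cc a b = Cc b a) (t a b : ℕ) :
    Fmat s n k l Cc h e t a b = Fmat s n k l Cc h e t b a := by
  unfold Fmat
  split_ifs <;> first | rfl | omega | rw [matN_symm s n Cc hCc]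

lemma Fmat_out_left {t a : ℕ} (ha : s + n + 1 + t ≤ a) (b : ℕ) :
    Fmat s n k l Cc h e t a b = 0 := by
  unfold Fmat; split_ifs <;> omega

lemma Fmat_out_right {t b : ℕ} (hb : s + n + 1 + t ≤ b) (a : ℕ) :
    Fmat s n k l Cc h e t a b = 0 := by
  unfold Fmat; split_ifs <;> omega

end Aux2
section Aux3

variable {G : Type u} [CommGroup G] (q : G) (s n : ℕ) (k l : ℤ)
  (Cc : Fin (s + n) → Fin (s + n) → ℤ) (xc : Fin (s + n) → G) (h : Fin s → ℤ) (κ : G)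
  (e : Equiv.Perm (Fin n))

lemma Fmat_stab {t a b : ℕ} (ht : t < n) (ha : a < s + n + 1 + t) (hb : b < s + n + 1 + t)
    (h1 : ¬(a = s + En n e t ∧ b = s + n)) (h2 : ¬(a = s + n ∧ b = s + En n e t)) :
    Fmat s n k l Cc h e t a b = Fmat s n k l Cc h e (t + 1) a b := by
  have hkey : ∀ j, j < n → Sn n e j = t → j = En n e t := fun j hj hS => Sn_eq_imp n e hj ht hS
  unfold Fmat
  split_ifs <;> try rfl
  all_goals try omega
  · -- a split, b = ι : Sn (a-s) < t false but < t+1 true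
    exfalso
    rename_i hA hB hAs hlt hlt'
    have : Sn n e (a - s) = t := by omega
    have := hkey (a - s) (by omega) this
    omega
  · exfalso
    rename_i hA hAeq hB hBs hlt hlt'
    have : Sn n e (b - s) = t := by omega
    have := hkey (b - s) (by omega) this
    omega

end Aux3
section Aux4

variable {G : Type u} [CommGroup G] (q : G) (s n : ℕ) (k l : ℤ)
  (Cc : Fin (s + n) → Fin (s + n) → ℤ) (xc : Fin (s + n) → G) (h : Fin s → ℤ) (κ : G)
  (e : Equiv.Perm (Fin n))

lemma Fmat_lt_lt {t a b : ℕ} (ha : a < s + n) (hb : b < s + n) :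
    Fmat s n k l Cc h e t a b = matN Cc a b := by
  unfold Fmat; split_ifs <;> first | rfl | omega

lemma Fmat_lt_iota {t a : ℕ} (ha : a < s) :
    Fmat s n k l Cc h e t a (s + n) = intN h a := by
  unfold Fmat; split_ifs <;> first | rfl | omega

lemma Fmat_split_iota {t a : ℕ} (ha : s ≤ a) (ha' : a < s + n) :
    Fmat s n k l Cc h e t a (s + n) = if Sn n e (a - s) < t then k else k + 1 := by
  unfold Fmat; split_ifs <;> first | rfl | omega

lemma Fmat_iota_iota {t : ℕ} :
    Fmat s n k l Cc h e t (s + n) (s + n) = l - 2 * k - 1 := by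
  unfold Fmat; split_ifs <;> first | rfl | omega

lemma Fmat_new_lt {t a b : ℕ} (ha : s + n + 1 ≤ a) (hr : a - (s + n + 1) < t)
    (hb : b < s + n) :
    Fmat s n k l Cc h e t a b = gRow s n k Cc h e (a - (s + n + 1)) b := by
  unfold Fmat; split_ifs <;> first | rfl | omega

lemma Fmat_new_iota {t a : ℕ} (ha : s + n + 1 ≤ a) (hr : a - (s + n + 1) < t) :
    Fmat s n k l Cc h e t a (s + n) = l - k - 1 := by
  unfold Fmat; split_ifs <;> first | rfl | omega

lemma Fmat_new_new {t a b : ℕ} (ha : s + n + 1 ≤ a) (hra : a - (s + n + 1) < t)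
    (hb : s + n + 1 ≤ b) (hrb : b - (s + n + 1) < t) :
    Fmat s n k l Cc h e t a b =
      matN Cc (s + En n e (a - (s + n + 1))) (s + En n e (b - (s + n + 1))) + l := by
  unfold Fmat; split_ifs <;> first | rfl | omega

lemma gRow_spec {t b : ℕ} (hb : b < s) :
    gRow s n k Cc h e t b = matN Cc (s + En n e t) b + intN h b := by
  unfold gRow; split_ifs <;> first | rfl | omega

lemma gRow_self {t : ℕ} (ht : t < n) :
    gRow s n k Cc h e t (s + En n e t) =
      matN Cc (s + En n e t) (s + En n e t) + k := by
  have := En_lt n e ht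
  unfold gRow; split_ifs <;> first | rfl | omega

lemma gRow_split {t b : ℕ} (hb : s ≤ b) (hb' : b < s + n) (hne : b ≠ s + En n e t) :
    gRow s n k Cc h e t b =
      matN Cc (s + En n e t) b + (if Sn n e (b - s) < t then k else k + 1) := by
  unfold gRow; split_ifs <;> first | rfl | omega

end Aux4
section Aux5

variable {G : Type u} [CommGroup G] (q : G) (s n : ℕ) (k l : ℤ)
  (Cc : Fin (s + n) → Fin (s + n) → ℤ) (xc : Fin (s + n) → G) (h : Fin s → ℤ) (κ : G)
  (e : Equiv.Perm (Fin n))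

lemma Fmat_iota_self {t : ℕ} (ht : t < n) :
    Fmat s n k l Cc h e t (s + En n e t) (s + n) = k + 1 := by
  have hEn := En_lt n e ht
  rw [Fmat_split_iota s n k l Cc h e (by omega) (by omega), Nat.add_sub_cancel_left,
    Sn_En n e ht]
  simp

lemma newcol (hCc : ∀ a b, Cc a b = Cc b a) {t a : ℕ} (ht : t < n) (ha : a < s + n + 1 + t) :
    (if a = s + En n e t then
        Fmat s n k l Cc h e t (s + En n e t) (s + En n e t) +
          Fmat s n k l Cc h e t (s + En n e t) (s + n) - 1
      else if a = s + n then
        Fmat s n k l Cc h e t (s + n) (s + n) +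
          Fmat s n k l Cc h e t (s + En n e t) (s + n) - 1
      else Fmat s n k l Cc h e t a (s + En n e t) + Fmat s n k l Cc h e t a (s + n)) =
    Fmat s n k l Cc h e (t + 1) a (s + n + 1 + t) := by
  have hEn := En_lt n e ht
  have hB : s + n + 1 + t - (s + n + 1) = t := by omega
  rw [Fmat_symm s n k l Cc h e hCc (t + 1) a (s + n + 1 + t)]
  by_cases h1 : a = s + En n e t
  · subst h1
    rw [if_pos rfl, Fmat_iota_self s n k l Cc h e ht,
      Fmat_lt_lt s n k l Cc h e (by omega) (by omega),
      Fmat_new_lt s n k l Cc h e (by omega) (by omega) (by omega), hB,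
      gRow_self s n k Cc h e ht]
    ring
  · rw [if_neg h1]
    by_cases h2 : a = s + n
    · subst h2
      rw [if_pos rfl, Fmat_iota_iota, Fmat_iota_self s n k l Cc h e ht,
        Fmat_new_iota s n k l Cc h e (by omega) (by omega)]
      ring
    · rw [if_neg h2]
      by_cases h3 : a < s + n
      · rw [Fmat_lt_lt s n k l Cc h e h3 (by omega),
          Fmat_new_lt s n k l Cc h e (by omega) (by omega) h3, hB]
        by_cases h4 : a < s
        · rw [Fmat_lt_iota s n k l Cc h e h4, gRow_spec s n k Cc h e h4,
            matN_symm s n Cc hCc]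
        · rw [Fmat_split_iota s n k l Cc h e (by omega) h3,
            gRow_split s n k Cc h e (by omega) h3 h1, matN_symm s n Cc hCc]
      · -- a is an earlier new node
        have har : s + n + 1 ≤ a := by omega
        have hr : a - (s + n + 1) < t := by omega
        have hEr := En_lt n e (show a - (s + n + 1) < n by omega)
        have hne : (s + En n e t : ℕ) ≠ s + En n e (a - (s + n + 1)) := by
          intro hc
          have := En_inj n e ht (show a - (s + n + 1) < n by omega) (by omega)
          omega
        rw [Fmat_new_lt s n k l Cc h e har hr (by omega),
          Fmat_new_iota s n k l Cc h e har hr,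
          Fmat_new_new s n k l Cc h e (a := s + n + 1 + t) (b := a)
            (by omega) (by omega) har (by omega), hB,
          gRow_split s n k Cc h e (by omega) (by omega) (fun hc => hne hc),
          Nat.add_sub_cancel_left, Sn_En n e ht,
          if_neg (show ¬ t < a - (s + n + 1) by omega),
          matN_symm s n Cc hCc (s + En n e (a - (s + n + 1))) (s + En n e t)]
        ring

lemma Xvec_stab {t a : ℕ} (ha : a < s + n + 1 + t) :
    Xvec q s n xc κ e t a = Xvec q s n xc κ e (t + 1) a := by
  unfold Xvec; split_ifs <;> first | rfl | omega

lemma Xvec_out {t a : ℕ} (ha : s + n + 1 + t ≤ a) :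
    Xvec q s n xc κ e t a = 1 := by
  unfold Xvec; split_ifs <;> first | rfl | omega

end Aux5
section Aux6


variable {G : Type u} [CommGroup G] (q : G)

lemma unlinkStep_m (Q : QP G) {i j : ℕ} (hcond : i < Q.m ∧ j < Q.m ∧ i ≠ j) :
    (unlinkStep q i j Q).m = Q.m + 1 := by
  unfold unlinkStep; rw [dif_pos hcond]

set_option maxHeartbeats 1600000 in
lemma unlinkStep_Cn (Q : QP G) {i j : ℕ} (hcond : i < Q.m ∧ j < Q.m ∧ i ≠ j) (a b : ℕ) :
    (unlinkStep q i j Q).Cn a b =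
      if a < Q.m then
        if b < Q.m then
          if (a = i ∧ b = j) ∨ (a = j ∧ b = i) then Q.Cn i j - 1 else Q.Cn a b
        else if b = Q.m then
          (if a = i then Q.Cn i i + Q.Cn i j - 1
           else if a = j then Q.Cn j j + Q.Cn i j - 1
           else Q.Cn a i + Q.Cn a j)
        else 0
      else if a = Q.m then
        (if b < Q.m then
          (if b = i then Q.Cn i i + Q.Cn i j - 1
           else if b = j then Q.Cn j j + Q.Cn i j - 1
           else Q.Cn b i + Q.Cn b j)
         else if b = Q.m then Q.Cn i i + Q.Cn j j + 2 * Q.Cn i j - 1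
         else 0)
      else 0 := by
  unfold unlinkStep
  rw [dif_pos hcond]
  unfold QP.Cn unlinkC
  dsimp only
  simp only [Fin.mk.injEq]
  split_ifs <;> first | rfl | omega

lemma unlinkStep_xn (Q : QP G) {i j : ℕ} (hcond : i < Q.m ∧ j < Q.m ∧ i ≠ j) (a : ℕ) :
    (unlinkStep q i j Q).xn a =
      if a < Q.m then Q.xn a else if a = Q.m then q⁻¹ * Q.xn i * Q.xn j else 1 := by
  unfold unlinkStep
  rw [dif_pos hcond]
  unfold QP.xn unlinkX
  dsimp only
  split_ifs <;> first | rfl | omega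

end Aux6
section Aux7

variable {G : Type u} [CommGroup G] (q : G) (s n : ℕ) (k l : ℤ)
  (Cc : Fin (s + n) → Fin (s + n) → ℤ) (xc : Fin (s + n) → G) (h : Fin s → ℤ) (κ : G)
  (e : Equiv.Perm (Fin n))

/-- The initial augmented quiver pair. -/
def Qinit : QP G :=
  ⟨s + n + 1,
    fun a b =>
      if (a : ℕ) < s + n then
        if (b : ℕ) < s + n then matN Cc (a : ℕ) (b : ℕ)
        else (if (a : ℕ) < s then intN h (a : ℕ) else k + 1)
      else
        if (b : ℕ) < s + n then (if (b : ℕ) < s then intN h (b : ℕ) else k + 1)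
        else l - 2 * k - 1,
    fun a => if (a : ℕ) < s + n then grpN xc (a : ℕ) else q * κ⟩

lemma Qinit_Cn (a b : ℕ) :
    (Qinit q s n k l Cc xc h κ).Cn a b = Fmat s n k l Cc h e 0 a b := by
  unfold QP.Cn Qinit Fmat
  dsimp only
  split_ifs <;> first | rfl | omega

lemma Qinit_xn (a : ℕ) :
    (Qinit q s n k l Cc xc h κ).xn a = Xvec q s n xc κ e 0 a := by
  unfold QP.xn Qinit Xvec
  dsimp only
  split_ifs <;> first | rfl | omega

lemma applySeq_append (S T : List (ℕ × ℕ)) (Q : QP G) :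
    applySeq q (S ++ T) Q = applySeq q T (applySeq q S Q) := by
  unfold applySeq; rw [List.foldl_append]

/-- The invariant: after `t` unlinking steps the quiver pair is described by `Fmat`/`Xvec`. -/
lemma key (hCc : ∀ a b, Cc a b = Cc b a) :
    ∀ t, t ≤ n →
      (applySeq q ((List.range t).map fun r => (s + En n e r, s + n))
          (Qinit q s n k l Cc xc h κ)).m = s + n + 1 + t ∧
      (∀ a b, (applySeq q ((List.range t).map fun r => (s + En n e r, s + n))
          (Qinit q s n k l Cc xc h κ)).Cn a b = Fmat s n k l Cc h e t a b) ∧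
      (∀ a, (applySeq q ((List.range t).map fun r => (s + En n e r, s + n))
          (Qinit q s n k l Cc xc h κ)).xn a = Xvec q s n xc κ e t a) := by
  intro t
  induction t with
  | zero =>
    intro _
    refine ⟨rfl, fun a b => ?_, fun a => ?_⟩
    · simpa [applySeq] using Qinit_Cn q s n k l Cc xc h κ e a b
    · simpa [applySeq] using Qinit_xn q s n k l Cc xc h κ e a
  | succ t IH =>
    intro ht1
    have ht : t < n := by omega
    have hEn := En_lt n e ht
    obtain ⟨hm, hC, hx⟩ := IH (by omega)
    set Qt := applySeq q ((List.range t).map fun r => (s + En n e r, s + n))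
      (Qinit q s n k l Cc xc h κ) with hQt
    have hlist : ((List.range (t + 1)).map fun r => ((s + En n e r, s + n) : ℕ × ℕ)) =
        ((List.range t).map fun r => (s + En n e r, s + n)) ++ [(s + En n e t, s + n)] := by
      rw [List.range_succ, List.map_append]; rfl
    rw [hlist, applySeq_append]
    have hone : applySeq q [(s + En n e t, s + n)] Qt = unlinkStep q (s + En n e t) (s + n) Qt := rfl
    rw [hone]
    have hcond : s + En n e t < Qt.m ∧ s + n < Qt.m ∧ s + En n e t ≠ s + n := by
      refine ⟨?_, ?_, ?_⟩ <;> omega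
    refine ⟨?_, fun a b => ?_, fun a => ?_⟩
    · rw [unlinkStep_m q Qt hcond]; omega
    · rw [unlinkStep_Cn q Qt hcond a b]
      simp only [hC, hm]
      by_cases hA : a < s + n + 1 + t
      · by_cases hB : b < s + n + 1 + t
        · rw [if_pos hA, if_pos hB]
          by_cases hp : (a = s + En n e t ∧ b = s + n) ∨ (a = s + n ∧ b = s + En n e t)
          · rw [if_pos hp]
            have h1 : Fmat s n k l Cc h e t (s + En n e t) (s + n) = k + 1 :=
              Fmat_iota_self s n k l Cc h e ht
            have h2 : Fmat s n k l Cc h e (t + 1) (s + En n e t) (s + n) = k := by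
              rw [Fmat_split_iota s n k l Cc h e (by omega) (by omega),
                Nat.add_sub_cancel_left, Sn_En n e ht, if_pos (by omega)]
            rcases hp with ⟨ha', hb'⟩ | ⟨ha', hb'⟩ <;> subst ha' <;> subst hb'
            · rw [h1, h2]; ring
            · rw [h1, Fmat_symm s n k l Cc h e hCc (t + 1), h2]; ring
          · rw [if_neg hp]
            exact Fmat_stab s n k l Cc h e ht hA hB
              (fun hc => hp (Or.inl hc)) (fun hc => hp (Or.inr hc))
        · rw [if_pos hA, if_neg hB]
          by_cases hB' : b = s + n + 1 + t
          · subst hB'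
            rw [if_pos rfl]
            exact newcol s n k l Cc h e hCc ht hA
          · rw [if_neg hB']
            exact (Fmat_out_right s n k l Cc h e (by omega) a).symm
      · rw [if_neg hA]
        by_cases hA' : a = s + n + 1 + t
        · subst hA'
          rw [if_pos rfl]
          by_cases hB : b < s + n + 1 + t
          · rw [if_pos hB, Fmat_symm s n k l Cc h e hCc (t + 1)]
            exact newcol s n k l Cc h e hCc ht hB
          · rw [if_neg hB]
            by_cases hB' : b = s + n + 1 + t
            · subst hB'
              rw [if_pos rfl, Fmat_iota_self s n k l Cc h e ht, Fmat_iota_iota,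
                Fmat_lt_lt s n k l Cc h e (by omega) (by omega),
                Fmat_new_new s n k l Cc h e (a := s + n + 1 + t) (b := s + n + 1 + t)
                  (by omega) (by omega) (by omega) (by omega),
                show s + n + 1 + t - (s + n + 1) = t from by omega]
              ring
            · rw [if_neg hB']
              exact (Fmat_out_right s n k l Cc h e (by omega) _).symm
        · rw [if_neg hA']
          exact (Fmat_out_left s n k l Cc h e (by omega) b).symm
    · rw [unlinkStep_xn q Qt hcond a]
      simp only [hx, hm]
      by_cases hA : a < s + n + 1 + t
      · rw [if_pos hA]
        exact Xvec_stab q s n xc κ e hA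
      · rw [if_neg hA]
        by_cases hA' : a = s + n + 1 + t
        · subst hA'
          rw [if_pos rfl]
          have h1 : Xvec q s n xc κ e t (s + En n e t) = grpN xc (s + En n e t) := by
            unfold Xvec; rw [if_pos (by omega)]
          have h2 : Xvec q s n xc κ e t (s + n) = q * κ := by
            unfold Xvec; rw [if_neg (by omega), if_pos rfl]
          have h3 : Xvec q s n xc κ e (t + 1) (s + n + 1 + t) =
              grpN xc (s + En n e t) * κ := by
            unfold Xvec
            rw [if_neg (by omega), if_neg (by omega), if_pos (by omega),
              show s + n + 1 + t - (s + n + 1) = t from by omega]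
          rw [h1, h2, h3, mul_comm q⁻¹ (grpN xc (s + En n e t)), mul_assoc,
            inv_mul_cancel_left]
        · rw [if_neg hA']
          exact (Xvec_out q s n xc κ e (by omega)).symm

end Aux7
section Aux8

variable {G : Type u} [CommGroup G] (q : G) (s n : ℕ) (k l : ℤ)
  (Cc : Fin (s + n) → Fin (s + n) → ℤ) (xc : Fin (s + n) → G) (h : Fin s → ℤ) (κ : G)
  (e : Equiv.Perm (Fin n))

lemma Sn_val {j : ℕ} (hj : j < n) : ((e.symm ⟨j, hj⟩ : Fin n) : ℕ) = Sn n e j := by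
  simp [Sn, dif_pos hj]

lemma S1 {a b : ℕ} (ha : a < s) (hb : b < s) :
    splitCN s n k l (matN Cc) (intN h) e.symm a b = matN Cc a b := by
  unfold splitCN; rw [if_pos ha, if_pos hb]

lemma S2 {a j : ℕ} (ha : a < s) :
    splitCN s n k l (matN Cc) (intN h) e.symm a (s + 2 * j) = matN Cc a (s + j) := by
  unfold splitCN
  rw [if_pos ha, if_neg (show ¬ s + 2 * j < s by omega)]
  simp only [show s + 2 * j - s = 2 * j from by omega,
    show 2 * j / 2 = j from by omega, show 2 * j % 2 = 0 from by omega]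
  norm_num

lemma S3 {a j : ℕ} (ha : a < s) :
    splitCN s n k l (matN Cc) (intN h) e.symm a (s + 2 * j + 1) =
      matN Cc a (s + j) + intN h a := by
  unfold splitCN
  rw [if_pos ha, if_neg (show ¬ s + 2 * j + 1 < s by omega)]
  simp only [show s + 2 * j + 1 - s = 2 * j + 1 from by omega,
    show (2 * j + 1) / 2 = j from by omega, show (2 * j + 1) % 2 = 1 from by omega]
  norm_num

lemma S10 {b i : ℕ} (hb : b < s) :
    splitCN s n k l (matN Cc) (intN h) e.symm (s + 2 * i) b = matN Cc (s + i) b := by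
  unfold splitCN
  rw [if_neg (show ¬ s + 2 * i < s by omega), if_pos hb]
  simp only [show s + 2 * i - s = 2 * i from by omega,
    show 2 * i / 2 = i from by omega, show 2 * i % 2 = 0 from by omega]
  norm_num

lemma S11 {b i : ℕ} (hb : b < s) :
    splitCN s n k l (matN Cc) (intN h) e.symm (s + 2 * i + 1) b =
      matN Cc (s + i) b + intN h b := by
  unfold splitCN
  rw [if_neg (show ¬ s + 2 * i + 1 < s by omega), if_pos hb]
  simp only [show s + 2 * i + 1 - s = 2 * i + 1 from by omega,
    show (2 * i + 1) / 2 = i from by omega, show (2 * i + 1) % 2 = 1 from by omega]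
  norm_num

lemma S4 {i j : ℕ} :
    splitCN s n k l (matN Cc) (intN h) e.symm (s + 2 * i) (s + 2 * j) =
      matN Cc (s + i) (s + j) := by
  unfold splitCN
  rw [if_neg (show ¬ s + 2 * i < s by omega), if_neg (show ¬ s + 2 * j < s by omega)]
  simp only [show s + 2 * i - s = 2 * i from by omega,
    show s + 2 * j - s = 2 * j from by omega,
    show 2 * i / 2 = i from by omega, show 2 * i % 2 = 0 from by omega,
    show 2 * j / 2 = j from by omega, show 2 * j % 2 = 0 from by omega]
  norm_num

lemma S6 {i : ℕ} :
    splitCN s n k l (matN Cc) (intN h) e.symm (s + 2 * i) (s + 2 * i + 1) =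
      matN Cc (s + i) (s + i) + k := by
  unfold splitCN
  rw [if_neg (show ¬ s + 2 * i < s by omega), if_neg (show ¬ s + 2 * i + 1 < s by omega)]
  simp only [show s + 2 * i - s = 2 * i from by omega,
    show s + 2 * i + 1 - s = 2 * i + 1 from by omega,
    show 2 * i / 2 = i from by omega, show 2 * i % 2 = 0 from by omega,
    show (2 * i + 1) / 2 = i from by omega, show (2 * i + 1) % 2 = 1 from by omega]
  norm_num

lemma S8 {i : ℕ} :
    splitCN s n k l (matN Cc) (intN h) e.symm (s + 2 * i + 1) (s + 2 * i) =
      matN Cc (s + i) (s + i) + k := by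
  unfold splitCN
  rw [if_neg (show ¬ s + 2 * i + 1 < s by omega), if_neg (show ¬ s + 2 * i < s by omega)]
  simp only [show s + 2 * i - s = 2 * i from by omega,
    show s + 2 * i + 1 - s = 2 * i + 1 from by omega,
    show 2 * i / 2 = i from by omega, show 2 * i % 2 = 0 from by omega,
    show (2 * i + 1) / 2 = i from by omega, show (2 * i + 1) % 2 = 1 from by omega]
  norm_num

lemma S5 {i j : ℕ} (hi : i < n) (hj : j < n) (hne : i ≠ j) :
    splitCN s n k l (matN Cc) (intN h) e.symm (s + 2 * i) (s + 2 * j + 1) =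
      matN Cc (s + i) (s + j) + (if Sn n e i < Sn n e j then k else k + 1) := by
  unfold splitCN
  rw [if_neg (show ¬ s + 2 * i < s by omega), if_neg (show ¬ s + 2 * j + 1 < s by omega)]
  simp only [show s + 2 * i - s = 2 * i from by omega,
    show s + 2 * j + 1 - s = 2 * j + 1 from by omega,
    show 2 * i / 2 = i from by omega, show 2 * i % 2 = 0 from by omega,
    show (2 * j + 1) / 2 = j from by omega, show (2 * j + 1) % 2 = 1 from by omega]
  rw [if_pos trivial, if_neg (by omega : ¬ (1 : ℕ) = 0), if_neg hne, dif_pos ⟨hi, hj⟩]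
  simp only [Fin.lt_def, Sn_val n e hi, Sn_val n e hj]
  split_ifs <;> first | contradiction | ring

lemma S7 {i j : ℕ} (hi : i < n) (hj : j < n) (hne : i ≠ j) :
    splitCN s n k l (matN Cc) (intN h) e.symm (s + 2 * i + 1) (s + 2 * j) =
      matN Cc (s + i) (s + j) + (if Sn n e j < Sn n e i then k else k + 1) := by
  unfold splitCN
  rw [if_neg (show ¬ s + 2 * i + 1 < s by omega), if_neg (show ¬ s + 2 * j < s by omega)]
  simp only [show s + 2 * j - s = 2 * j from by omega,
    show s + 2 * i + 1 - s = 2 * i + 1 from by omega,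
    show 2 * j / 2 = j from by omega, show 2 * j % 2 = 0 from by omega,
    show (2 * i + 1) / 2 = i from by omega, show (2 * i + 1) % 2 = 1 from by omega]
  rw [if_pos trivial, if_neg hne, dif_pos ⟨hi, hj⟩]
  simp only [Fin.lt_def, Sn_val n e hi, Sn_val n e hj]
  split_ifs <;> first | contradiction | ring

lemma S9 {i j : ℕ} :
    splitCN s n k l (matN Cc) (intN h) e.symm (s + 2 * i + 1) (s + 2 * j + 1) =
      matN Cc (s + i) (s + j) + l := by
  unfold splitCN
  rw [if_neg (show ¬ s + 2 * i + 1 < s by omega), if_neg (show ¬ s + 2 * j + 1 < s by omega)]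
  simp only [show s + 2 * i + 1 - s = 2 * i + 1 from by omega,
    show s + 2 * j + 1 - s = 2 * j + 1 from by omega,
    show (2 * i + 1) / 2 = i from by omega, show (2 * i + 1) % 2 = 1 from by omega,
    show (2 * j + 1) / 2 = j from by omega, show (2 * j + 1) % 2 = 1 from by omega]
  norm_num

end Aux8
section Aux9

variable {G : Type u} [CommGroup G] (q : G) (s n : ℕ) (k l : ℤ)
  (Cc : Fin (s + n) → Fin (s + n) → ℤ) (xc : Fin (s + n) → G) (h : Fin s → ℤ) (κ : G)
  (e : Equiv.Perm (Fin n))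

/-- The relabeling, at natural-number indices. -/
def piN (a : ℕ) : ℕ :=
  if a < s then a
  else if a < s + n then s + 2 * (a - s)
  else if a = s + n then s + 2 * n
  else if a - (s + n + 1) < n then s + 2 * En n e (a - (s + n + 1)) + 1
  else a

lemma piN_lt {a : ℕ} (ha : a < s) : piN s n e a = a := by
  unfold piN; rw [if_pos ha]

lemma piN_split {i : ℕ} (hi : i < n) : piN s n e (s + i) = s + 2 * i := by
  unfold piN
  rw [if_neg (by omega), if_pos (by omega), show s + i - s = i from by omega]

lemma piN_iota : piN s n e (s + n) = s + 2 * n := by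
  unfold piN; rw [if_neg (by omega), if_neg (by omega), if_pos rfl]

lemma piN_new {r : ℕ} (hr : r < n) : piN s n e (s + n + 1 + r) = s + 2 * En n e r + 1 := by
  unfold piN
  rw [if_neg (by omega), if_neg (by omega), if_neg (by omega),
    if_pos (show s + n + 1 + r - (s + n + 1) < n by omega),
    show s + n + 1 + r - (s + n + 1) = r from by omega]

/-- The last-column values. -/
def lcN (a : ℕ) : ℤ := if a < s then intN h a else if (a - s) % 2 = 0 then k else l - k - 1

/-- The target matrix. -/
def ENf (a b : ℕ) : ℤ :=
  if a < s + 2 * n then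
    if b < s + 2 * n then splitCN s n k l (matN Cc) (intN h) e.symm a b
    else lcN s k l h a
  else if b < s + 2 * n then lcN s k l h b
  else l - 2 * k - 1

lemma classify {c : ℕ} (hc : c < s + 2 * n + 1) :
    c < s ∨ (∃ i, i < n ∧ c = s + i) ∨ c = s + n ∨ (∃ r, r < n ∧ c = s + n + 1 + r) := by
  by_cases h1 : c < s
  · exact Or.inl h1
  · by_cases h2 : c < s + n
    · exact Or.inr (Or.inl ⟨c - s, by omega, by omega⟩)
    · by_cases h3 : c = s + n
      · exact Or.inr (Or.inr (Or.inl h3))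
      · exact Or.inr (Or.inr (Or.inr ⟨c - (s + n + 1), by omega, by omega⟩))

lemma translateC (hCc : ∀ a b, Cc a b = Cc b a) {a b : ℕ}
    (ha : a < s + 2 * n + 1) (hb : b < s + 2 * n + 1) :
    Fmat s n k l Cc h e n a b = ENf s n k l Cc h e (piN s n e a) (piN s n e b) := by
  unfold ENf lcN
  rcases classify s n ha with h1 | ⟨i, hi, rfl⟩ | h1 | ⟨r, hr, rfl⟩
  · -- a < s
    rw [piN_lt s n e h1]
    rcases classify s n hb with h2 | ⟨j, hj, rfl⟩ | h2 | ⟨r, hr, rfl⟩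
    · rw [piN_lt s n e h2, if_pos (by omega), if_pos (by omega), S1 s n k l Cc h e h1 h2,
        Fmat_lt_lt s n k l Cc h e (by omega) (by omega)]
    · rw [piN_split s n e hj, if_pos (by omega), if_pos (by omega), S2 s n k l Cc h e h1,
        Fmat_lt_lt s n k l Cc h e (by omega) (by omega)]
    · subst h2
      rw [piN_iota s n e, if_pos (by omega), if_neg (by omega), if_pos h1,
        Fmat_lt_iota s n k l Cc h e h1]
    · have hEr := En_lt n e hr
      rw [piN_new s n e hr, if_pos (by omega), if_pos (by omega),
        S3 s n k l Cc h e (j := En n e r) h1,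
        Fmat_symm s n k l Cc h e hCc,
        Fmat_new_lt s n k l Cc h e (by omega) (by omega) (by omega),
        show s + n + 1 + r - (s + n + 1) = r from by omega,
        gRow_spec s n k Cc h e h1, matN_symm s n Cc hCc (s + En n e r) a]
  · -- a = s + i split
    have hsi : s + i < s + n := by omega
    rw [piN_split s n e hi]
    rcases classify s n hb with h2 | ⟨j, hj, rfl⟩ | h2 | ⟨r, hr, rfl⟩
    · rw [piN_lt s n e h2, if_pos (by omega), if_pos (by omega), S10 s n k l Cc h e h2,
        Fmat_lt_lt s n k l Cc h e (by omega) (by omega)]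
    · rw [piN_split s n e hj, if_pos (by omega), if_pos (by omega), S4,
        Fmat_lt_lt s n k l Cc h e (by omega) (by omega)]
    · subst h2
      rw [piN_iota s n e, if_pos (by omega), if_neg (by omega), if_neg (by omega),
        if_pos (show (s + 2 * i - s) % 2 = 0 by omega),
        Fmat_split_iota s n k l Cc h e (by omega) (by omega),
        show s + i - s = i from by omega, if_pos (Sn_lt n e hi)]
    · have hEr := En_lt n e hr
      rw [piN_new s n e hr, if_pos (by omega), if_pos (by omega),
        Fmat_symm s n k l Cc h e hCc,
        Fmat_new_lt s n k l Cc h e (by omega) (by omega) hsi,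
        show s + n + 1 + r - (s + n + 1) = r from by omega]
      by_cases hie : i = En n e r
      · subst hie
        rw [S6, gRow_self s n k Cc h e hr]
      · rw [S5 s n k l Cc h e hi hEr hie,
          gRow_split s n k Cc h e (by omega) hsi (by omega),
          show s + i - s = i from by omega, Sn_En n e hr,
          matN_symm s n Cc hCc (s + En n e r) (s + i)]
  · -- a = s + n
    subst h1
    rw [piN_iota s n e]
    rcases classify s n hb with h2 | ⟨j, hj, rfl⟩ | h2 | ⟨r, hr, rfl⟩
    · rw [piN_lt s n e h2, if_neg (by omega), if_pos (by omega), if_pos h2,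
        Fmat_symm s n k l Cc h e hCc, Fmat_lt_iota s n k l Cc h e h2]
    · rw [piN_split s n e hj, if_neg (by omega), if_pos (by omega), if_neg (by omega),
        if_pos (show (s + 2 * j - s) % 2 = 0 by omega),
        Fmat_symm s n k l Cc h e hCc, Fmat_split_iota s n k l Cc h e (by omega) (by omega),
        show s + j - s = j from by omega, if_pos (Sn_lt n e hj)]
    · subst h2
      rw [piN_iota s n e, if_neg (by omega), if_neg (by omega), Fmat_iota_iota]
    · have hEr := En_lt n e hr
      rw [piN_new s n e hr, if_neg (by omega), if_pos (by omega), if_neg (by omega),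
        if_neg (show ¬ (s + 2 * En n e r + 1 - s) % 2 = 0 by omega),
        Fmat_symm s n k l Cc h e hCc,
        Fmat_new_iota s n k l Cc h e (by omega) (by omega)]
  · -- a = s + n + 1 + r new
    have hEr := En_lt n e hr
    have hsub : s + n + 1 + r - (s + n + 1) = r := by omega
    rw [piN_new s n e hr]
    rcases classify s n hb with h2 | ⟨j, hj, rfl⟩ | h2 | ⟨r', hr', rfl⟩
    · rw [piN_lt s n e h2, if_pos (by omega), if_pos (by omega), S11 s n k l Cc h e h2,
        Fmat_new_lt s n k l Cc h e (by omega) (by omega) (by omega), hsub,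
        gRow_spec s n k Cc h e h2]
    · have hsj : s + j < s + n := by omega
      rw [if_pos (by omega), piN_split s n e hj, if_pos (by omega),
        Fmat_new_lt s n k l Cc h e (by omega) (by omega) hsj, hsub]
      by_cases hie : j = En n e r
      · subst hie
        rw [S8, gRow_self s n k Cc h e hr]
      · rw [S7 s n k l Cc h e hEr hj (fun hc => hie hc.symm),
          gRow_split s n k Cc h e (by omega) hsj (by omega),
          show s + j - s = j from by omega, Sn_En n e hr]
    · subst h2
      rw [piN_iota s n e, if_pos (by omega), if_neg (by omega), if_neg (by omega),
        if_neg (show ¬ (s + 2 * En n e r + 1 - s) % 2 = 0 by omega),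
        Fmat_new_iota s n k l Cc h e (by omega) (by omega)]
    · have hEr' := En_lt n e hr'
      rw [piN_new s n e hr', if_pos (by omega), if_pos (by omega), S9,
        Fmat_new_new s n k l Cc h e (by omega) (by omega) (by omega) (by omega), hsub,
        show s + n + 1 + r' - (s + n + 1) = r' from by omega]

lemma translateX {a : ℕ} (ha : a < s + 2 * n + 1) :
    Xvec q s n xc κ e n a =
      (if piN s n e a < s + 2 * n then splitXN s (grpN xc) κ (piN s n e a) else q * κ) := by
  unfold Xvec splitXN
  rcases classify s n ha with h1 | ⟨i, hi, rfl⟩ | h1 | ⟨r, hr, rfl⟩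
  · rw [piN_lt s n e h1, if_pos (by omega), if_pos (by omega), if_pos h1]
  · rw [piN_split s n e hi, if_pos (by omega), if_pos (by omega), if_neg (by omega),
      if_pos (show (s + 2 * i - s) % 2 = 0 by omega),
      show s + (s + 2 * i - s) / 2 = s + i from by omega]
  · subst h1
    rw [piN_iota s n e, if_neg (by omega), if_pos rfl, if_neg (by omega)]
  · have hEr := En_lt n e hr
    rw [piN_new s n e hr, if_neg (by omega), if_neg (by omega),
      if_pos (show s + n + 1 + r - (s + n + 1) < n by omega),
      show s + n + 1 + r - (s + n + 1) = r from by omega,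
      if_pos (by omega), if_neg (by omega),
      if_neg (show ¬ (s + 2 * En n e r + 1 - s) % 2 = 0 by omega),
      show s + (s + 2 * En n e r + 1 - s) / 2 = s + En n e r from by omega]

end Aux9
/-- **Splitting by unlinking** (Proposition 6.1).
Fix splitting data `Č, x̌, s, n, k, l, h, κ`. Extend `Č` by a last node `ι = s + n` with
entries `h u` toward spectators, `k + 1` toward split nodes and diagonal entry `l - 2k - 1`,
and extend `x̌` by `x̌(ι) = q·κ`. Fix an enumeration `e` of `Fin n` (so `σ := e⁻¹` satisfies
`σ (e t) = t`), and let `(D, y)` be obtained by applying the unlinkings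
`U(s + e 0, ι), …, U(s + e (n-1), ι)` in this order. Let `π` keep nodes `0, …, s+n-1` at the
positions of the spectators and split nodes in the interleaved ordering of the split quiver,
send the node created at step `t` to the position of the primed copy `(s + e t)'`, and send
`ι` to the last position. Then `(D, y)` coincides after relabeling by `π` with the
`(k,l)`-split quiver pair `(C_σ, x_σ)` augmented by a last node `ι` with entries `h u` toward
spectators, `k` toward split nodes, `l - k - 1` toward primed copies, diagonal `l - 2k - 1`,
and variable `q·κ`. -/
theorem splitting_by_unlinking {G : Type u} [CommGroup G] (q : G)
    (s n : ℕ) (hn : 1 ≤ n) (k l : ℤ)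
    (Cc : Fin (s + n) → Fin (s + n) → ℤ) (hCc : ∀ a b, Cc a b = Cc b a)
    (xc : Fin (s + n) → G) (h : Fin s → ℤ) (κ : G)
    (e : Equiv.Perm (Fin n)) :
    let σ : Equiv.Perm (Fin n) := e.symm
    let augC : Fin (s + n + 1) → Fin (s + n + 1) → ℤ := fun a b =>
      if (a : ℕ) < s + n then
        if (b : ℕ) < s + n then matN Cc (a : ℕ) (b : ℕ)
        else (if (a : ℕ) < s then intN h (a : ℕ) else k + 1)
      else
        if (b : ℕ) < s + n then (if (b : ℕ) < s then intN h (b : ℕ) else k + 1)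
        else l - 2 * k - 1
    let augX : Fin (s + n + 1) → G := fun a =>
      if (a : ℕ) < s + n then grpN xc (a : ℕ) else q * κ
    let D : QP G :=
      applySeq q (List.ofFn fun t : Fin n => (s + ((e t : Fin n) : ℕ), s + n))
        ⟨s + n + 1, augC, augX⟩
    let πN : ℕ → ℕ := fun a =>
      if a < s then a
      else if a < s + n then s + 2 * (a - s)
      else if a = s + n then s + 2 * n
      else if ht : a - (s + n + 1) < n then
        s + 2 * ((e ⟨a - (s + n + 1), ht⟩ : Fin n) : ℕ) + 1
      else a
    let lastCol : ℕ → ℤ := fun a =>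
      if a < s then intN h a else if (a - s) % 2 = 0 then k else l - k - 1
    let EN : ℕ → ℕ → ℤ := fun a b =>
      if a < s + 2 * n then
        if b < s + 2 * n then splitCN s n k l (matN Cc) (intN h) σ a b
        else lastCol a
      else if b < s + 2 * n then lastCol b
      else l - 2 * k - 1
    let zN : ℕ → G := fun a =>
      if a < s + 2 * n then splitXN s (grpN xc) κ a else q * κ
    D.m = s + 2 * n + 1 ∧
    (∀ a b, a < s + 2 * n + 1 → b < s + 2 * n + 1 → D.Cn a b = EN (πN a) (πN b)) ∧
    (∀ a, a < s + 2 * n + 1 → D.xn a = zN (πN a)) := by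
  intro σ augC augX D πN lastCol EN zN
  have hlist : (List.ofFn fun t : Fin n => (s + ((e t : Fin n) : ℕ), s + n)) =
      (List.range n).map (fun r => (s + En n e r, s + n)) := by
    apply List.ext_getElem
    · simp
    · intro i h1 h2
      have hi : i < n := by simpa using h1
      simp [En, hi]
  have hQ : D = applySeq q ((List.range n).map fun r => (s + En n e r, s + n))
      (Qinit q s n k l Cc xc h κ) := by
    show applySeq q (List.ofFn fun t : Fin n => (s + ((e t : Fin n) : ℕ), s + n))
        ⟨s + n + 1, augC, augX⟩ = _
    rw [hlist]
    rfl
  have hπ : ∀ c, πN c = piN s n e c := by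
    intro c
    show (if c < s then c
      else if c < s + n then s + 2 * (c - s)
      else if c = s + n then s + 2 * n
      else if ht : c - (s + n + 1) < n then
        s + 2 * ((e ⟨c - (s + n + 1), ht⟩ : Fin n) : ℕ) + 1
      else c) = piN s n e c
    unfold piN En
    split_ifs <;> rfl
  obtain ⟨hm, hC, hx⟩ := key q s n k l Cc xc h κ e hCc n le_rfl
  refine ⟨?_, fun a b ha hb => ?_, fun a ha => ?_⟩
  · rw [hQ, hm]; omega
  · rw [hQ, hC a b, hπ a, hπ b]
    have hEN : ∀ x y, EN x y = ENf s n k l Cc h e x y := fun x y => rfl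
    rw [hEN]
    exact translateC s n k l Cc h e hCc ha hb
  · rw [hQ, hx a, hπ a]
    exact translateX q s n xc κ e ha

end QuiverUnlink
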